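/- Let S be a symmetric nonnegative matrix and y^k > 0. For the update y^{k+1}_i = v_i y^k_i / (Sy^k)_i with v > 0 and Sy^k > 0, Jensen's inequality for the convex function t ↦ 1/t gives: Σ_i v_i y^{k+1}_i ≥ (Σ_i v_i y^k_i)^2 / ((y^k)^T S y^k). -/

import Mathlib

open Matrix BigOperators

theorem wrgn_jensen_mass_bound (n : ℕ) (S : Matrix (Fin n) (Fin n) ℝ)
    (hsym : S.IsSymm) (hnonneg : ∀ i j, 0 ≤ S i j)
    (v y : Fin n → ℝ) (hv : ∀ i, 0 < v i) (hy : ∀ i, 0 < y i)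
    (hSy : ∀ i, 0 < (S *ᵥ y) i)
    (y' : Fin n → ℝ) (hy' : ∀ i, y' i = v i * y i / (S *ᵥ y) i) :
    (∑ i, v i * y i) ^ 2 / (y ⬝ᵥ (S *ᵥ y)) ≤ ∑ i, v i * y' i := by
  have hdot : y ⬝ᵥ (S *ᵥ y) = ∑ i, y i * (S *ᵥ y) i := rfl
  rcases Nat.eq_zero_or_pos n with hn | hn
  · subst hn
    simp
  · have hpos : 0 < y ⬝ᵥ (S *ᵥ y) := by
      rw [hdot]
      apply Finset.sum_pos
      · intro i _
        exact mul_pos (hy i) (hSy i)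
      · have : Nonempty (Fin n) := Fin.pos_iff_nonempty.mp hn
        exact Finset.univ_nonempty
    rw [div_le_iff₀ hpos]
    -- use Cauchy-Schwarz: sum_mul_sq_le_sq_mul_sq
    have cs := Finset.sum_mul_sq_le_sq_mul_sq Finset.univ
      (fun i => v i * Real.sqrt (y i) / Real.sqrt ((S *ᵥ y) i))
      (fun i => Real.sqrt (y i * (S *ᵥ y) i))
    have h1 : ∀ i : Fin n, v i * Real.sqrt (y i) / Real.sqrt ((S *ᵥ y) i) *
        Real.sqrt (y i * (S *ᵥ y) i) = v i * y i := by
      intro i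
      rw [Real.sqrt_mul (le_of_lt (hy i))]
      have hs : Real.sqrt ((S *ᵥ y) i) ≠ 0 := ne_of_gt (Real.sqrt_pos.mpr (hSy i))
      field_simp
      linear_combination v i * Real.mul_self_sqrt (hy i).le
    have h2 : ∀ i : Fin n, (v i * Real.sqrt (y i) / Real.sqrt ((S *ᵥ y) i)) ^ 2 =
        v i * y' i := by
      intro i
      rw [hy' i, div_pow, mul_pow, Real.sq_sqrt (le_of_lt (hy i)),
        Real.sq_sqrt (le_of_lt (hSy i))]
      field_simp
    have h3 : ∀ i : Fin n, Real.sqrt (y i * (S *ᵥ y) i) ^ 2 = y i * (S *ᵥ y) i := by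
      intro i
      exact Real.sq_sqrt (le_of_lt (mul_pos (hy i) (hSy i)))
    calc (∑ i, v i * y i) ^ 2
        = (∑ i, v i * Real.sqrt (y i) / Real.sqrt ((S *ᵥ y) i) *
            Real.sqrt (y i * (S *ᵥ y) i)) ^ 2 := by
          congr 1; exact Finset.sum_congr rfl fun i _ => (h1 i).symm
      _ ≤ (∑ i, (v i * Real.sqrt (y i) / Real.sqrt ((S *ᵥ y) i)) ^ 2) *
            ∑ i, Real.sqrt (y i * (S *ᵥ y) i) ^ 2 := cs
      _ = (∑ i, v i * y' i) * (y ⬝ᵥ (S *ᵥ y)) := by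
          rw [hdot]
          congr 1
          · exact Finset.sum_congr rfl fun i _ => h2 i
          · exact Finset.sum_congr rfl fun i _ => h3 i
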